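/- Let P ⊆ ℝ^d be a full-dimensional lattice polytope with codegree a. If P is nearly Gorenstein, then P = ⌊aP⌋ + {P}, i.e. P is the Minkowski sum of the floor polytope of aP and the remainder polytope of P. -/

import Mathlib

open Set Pointwise

/-- The set of lattice points of `ℝ^d`. -/
def latticePoints (d : ℕ) : Set (Fin d → ℝ) :=
  {x | ∀ i, ∃ z : ℤ, x i = (z : ℝ)}

/-- A lattice polytope: the convex hull of a finite set of lattice points. -/
def IsLatticePolytope {d : ℕ} (P : Set (Fin d → ℝ)) : Prop :=
  ∃ V : Finset (Fin d → ℝ), (V : Set (Fin d → ℝ)) ⊆ latticePoints d ∧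
    P = convexHull ℝ (V : Set (Fin d → ℝ))

/-- The natural pairing of an integral linear functional with a point of `ℝ^d`. -/
def pairing {d : ℕ} (n : Fin d → ℤ) (x : Fin d → ℝ) : ℝ :=
  ∑ i, (n i : ℝ) * x i

/-- `P = {x | n_F(x) ≥ -h_F}` is an irredundant presentation with primitive
integral inner normals, i.e. the facet presentation of `P`. -/
def IsFacetPresentation {d m : ℕ} (P : Set (Fin d → ℝ))
    (n : Fin m → Fin d → ℤ) (h : Fin m → ℤ) : Prop :=
  P = {x | ∀ i, pairing (n i) x ≥ -(h i : ℝ)} ∧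
  (∀ i, Finset.univ.gcd (n i) = 1) ∧
  (∀ i, ∃ x : Fin d → ℝ, pairing (n i) x < -(h i : ℝ) ∧
    ∀ j, j ≠ i → pairing (n j) x ≥ -(h j : ℝ))

/-- `a` is the codegree of `P`: the least `k ≥ 1` such that `int(kP)` contains
a lattice point. -/
def IsCodegree {d : ℕ} (P : Set (Fin d → ℝ)) (a : ℕ) : Prop :=
  1 ≤ a ∧ (interior ((a : ℝ) • P) ∩ latticePoints d).Nonempty ∧
    ∀ k : ℕ, 1 ≤ k → (interior ((k : ℝ) • P) ∩ latticePoints d).Nonempty → a ≤ k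

/-- The floor polytope `⌊R⌋ = conv(int(R) ∩ ℤ^d)`. -/
def floorPoly {d : ℕ} (R : Set (Fin d → ℝ)) : Set (Fin d → ℝ) :=
  convexHull ℝ (interior R ∩ latticePoints d)

/-- The remainder polytope `{P} = conv{x ∈ ℤ^d | n_F(x) ≥ (a-1)h_F - 1}`,
defined in terms of the facet presentation data and the codegree `a`. -/
def remPoly {d m : ℕ} (n : Fin m → Fin d → ℤ) (h : Fin m → ℤ) (a : ℕ) :
    Set (Fin d → ℝ) :=
  convexHull ℝ {x | x ∈ latticePoints d ∧
    ∀ i, pairing (n i) x ≥ ((a : ℝ) - 1) * (h i : ℝ) - 1}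

/-- The cone `C_P ⊆ ℝ^d × ℝ` over `P`, in terms of the facet presentation. -/
def coneOver {d m : ℕ} (n : Fin m → Fin d → ℤ) (h : Fin m → ℤ) :
    Set ((Fin d → ℝ) × ℝ) :=
  {p | ∀ i, pairing (n i) p.1 ≥ -(p.2 * (h i : ℝ))}

/-- The interior `int(C_P)` of the cone over `P`. -/
def intCone {d m : ℕ} (n : Fin m → Fin d → ℤ) (h : Fin m → ℤ) :
    Set ((Fin d → ℝ) × ℝ) :=
  {p | ∀ i, pairing (n i) p.1 > -(p.2 * (h i : ℝ))}

/-- The anticanonical set `ant(C_P)` of the cone over `P`. -/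
def antCone {d m : ℕ} (n : Fin m → Fin d → ℤ) (h : Fin m → ℤ) :
    Set ((Fin d → ℝ) × ℝ) :=
  {p | ∀ i, pairing (n i) p.1 ≥ -(p.2 * (h i : ℝ)) - 1}

/-- Lattice points of `ℝ^d × ℝ = ℝ^{d+1}`. -/
def latticePairs (d : ℕ) : Set ((Fin d → ℝ) × ℝ) :=
  {p | p.1 ∈ latticePoints d ∧ ∃ z : ℤ, p.2 = (z : ℝ)}

/-- The nearly Gorenstein condition with respect to a given facet presentation:
`(C_P ∩ ℤ^{d+1}) \ {0} ⊆ (int(C_P) ∩ ℤ^{d+1}) + (ant(C_P) ∩ ℤ^{d+1})`. -/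
def NGIncl {d m : ℕ} (n : Fin m → Fin d → ℤ) (h : Fin m → ℤ) : Prop :=
  (coneOver n h ∩ latticePairs d) \ {(0 : (Fin d → ℝ) × ℝ)} ⊆
    (intCone n h ∩ latticePairs d) + (antCone n h ∩ latticePairs d)

/-- A full-dimensional lattice polytope is nearly Gorenstein if the nearly
Gorenstein inclusion holds for its facet presentation. -/
def NearlyGorenstein {d : ℕ} (P : Set (Fin d → ℝ)) : Prop :=
  ∃ (m : ℕ) (n : Fin m → Fin d → ℤ) (h : Fin m → ℤ),
    IsFacetPresentation P n h ∧ NGIncl n h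

/-- The polar dual `Q* = {y | y(x) ≥ -1 for all x ∈ Q}`. -/
def polarDual {d : ℕ} (Q : Set (Fin d → ℝ)) : Set (Fin d → ℝ) :=
  {y | ∀ x ∈ Q, (∑ i, y i * x i) ≥ -1}

/-- A reflexive polytope: a lattice polytope with `0` in its interior whose
polar dual is again a lattice polytope. -/
def IsReflexive {d : ℕ} (Q : Set (Fin d → ℝ)) : Prop :=
  IsLatticePolytope Q ∧ (0 : Fin d → ℝ) ∈ interior Q ∧
    IsLatticePolytope (polarDual Q)

/-- A Gorenstein polytope: some dilate `kP`, translated by a lattice vector,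
is reflexive. -/
def IsGorenstein {d : ℕ} (P : Set (Fin d → ℝ)) : Prop :=
  ∃ (k : ℕ) (w : Fin d → ℝ), 1 ≤ k ∧ w ∈ latticePoints d ∧
    IsReflexive ((fun x => x - w) '' ((k : ℝ) • P))

/-- The integer decomposition property. -/
def IsIDP {d : ℕ} (P : Set (Fin d → ℝ)) : Prop :=
  ∀ k : ℕ, 1 ≤ k → ∀ x ∈ ((k : ℝ) • P) ∩ latticePoints d,
    ∃ y : Fin k → Fin d → ℝ, (∀ j, y j ∈ P ∩ latticePoints d) ∧ x = ∑ j, y j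

/-- Minkowski indecomposability of a lattice polytope. -/
def IsIndecomposable {d : ℕ} (P : Set (Fin d → ℝ)) : Prop :=
  (¬ ∃ p : Fin d → ℝ, P = {p}) ∧
  ∀ P₁ P₂ : Set (Fin d → ℝ), IsLatticePolytope P₁ → IsLatticePolytope P₂ →
    P = P₁ + P₂ → (∃ p, P₁ = {p}) ∨ (∃ p, P₂ = {p})

/-- A `(0,1)`-polytope: the convex hull of a set of `(0,1)`-vectors. -/
def Is01Polytope {d : ℕ} (P : Set (Fin d → ℝ)) : Prop :=
  ∃ V : Finset (Fin d → ℝ), (∀ v ∈ V, ∀ i, v i = 0 ∨ v i = 1) ∧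
    P = convexHull ℝ (V : Set (Fin d → ℝ))

section Helpers

variable {d m : ℕ}

lemma pairing_add (nn : Fin d → ℤ) (x y : Fin d → ℝ) :
    pairing nn (x + y) = pairing nn x + pairing nn y := by
  simp [pairing, Finset.sum_add_distrib, mul_add]

lemma pairing_smul (nn : Fin d → ℤ) (c : ℝ) (x : Fin d → ℝ) :
    pairing nn (c • x) = c * pairing nn x := by
  unfold pairing
  rw [Finset.mul_sum]
  refine Finset.sum_congr rfl fun i _ => ?_
  simp [mul_left_comm]

lemma pairing_neg (nn : Fin d → ℤ) (x : Fin d → ℝ) :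
    pairing nn (-x) = -pairing nn x := by
  simp [pairing, Finset.sum_neg_distrib]

lemma pairing_sub (nn : Fin d → ℤ) (x y : Fin d → ℝ) :
    pairing nn (x - y) = pairing nn x - pairing nn y := by
  rw [sub_eq_add_neg, pairing_add, pairing_neg]; ring

lemma pairing_zero (nn : Fin d → ℤ) : pairing nn (0 : Fin d → ℝ) = 0 := by
  simp [pairing]

lemma pairing_single (nn : Fin d → ℤ) (j : Fin d) (r : ℝ) :
    pairing nn (Pi.single j r) = (nn j : ℝ) * r := by
  unfold pairing
  rw [Finset.sum_eq_single j]
  · simp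
  · intro b _ hb; simp [Pi.single_apply, hb]
  · simp

lemma pairing_int (nn : Fin d → ℤ) {x : Fin d → ℝ} (hx : x ∈ latticePoints d) :
    ∃ Z : ℤ, pairing nn x = (Z : ℝ) := by
  choose Z hZ using hx
  refine ⟨∑ i, nn i * Z i, ?_⟩
  unfold pairing
  push_cast
  exact Finset.sum_congr rfl fun i _ => by rw [hZ]

lemma continuous_pairing (nn : Fin d → ℤ) : Continuous (pairing nn) := by
  unfold pairing
  exact continuous_finset_sum _ fun i _ => continuous_const.mul (continuous_apply i)

lemma lattice_sub {x y : Fin d → ℝ} (hx : x ∈ latticePoints d) (hy : y ∈ latticePoints d) :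
    x - y ∈ latticePoints d := by
  intro i
  obtain ⟨zx, hzx⟩ := hx i
  obtain ⟨zy, hzy⟩ := hy i
  exact ⟨zx - zy, by simp [hzx, hzy]⟩

lemma int_strict {r s : ℝ} (hA : ∃ A : ℤ, r = (A : ℝ)) (hB : ∃ B : ℤ, s = (B : ℝ))
    (hlt : s < r) : s + 1 ≤ r := by
  obtain ⟨A, rfl⟩ := hA
  obtain ⟨B, rfl⟩ := hB
  have : B + 1 ≤ A := by exact_mod_cast hlt
  exact_mod_cast this

end Helpers
section Helpers2

variable {d m : ℕ}

lemma normal_ne_zero {nn : Fin d → ℤ} (hprim : Finset.univ.gcd nn = 1) :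
    ∃ j, nn j ≠ 0 := by
  by_contra hc
  push_neg at hc
  have : Finset.univ.gcd nn = 0 := Finset.gcd_eq_zero_iff.mpr fun j _ => hc j
  rw [hprim] at this
  exact one_ne_zero this

lemma smul_halfspaces (n : Fin m → Fin d → ℤ) (h : Fin m → ℤ) {k : ℝ} (hk : 0 < k) :
    k • {x : Fin d → ℝ | ∀ i, pairing (n i) x ≥ -(h i : ℝ)} =
      {x | ∀ i, pairing (n i) x ≥ -(k * (h i : ℝ))} := by
  ext x
  rw [Set.mem_smul_set_iff_inv_smul_mem₀ hk.ne']
  simp only [Set.mem_setOf_eq, pairing_smul]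
  constructor
  · intro hx i
    have h1 := hx i
    rw [ge_iff_le, le_inv_mul_iff₀ hk] at h1
    linarith [h1]
  · intro hx i
    rw [ge_iff_le, le_inv_mul_iff₀ hk]
    linarith [hx i]

lemma interior_halfspaces (n : Fin m → Fin d → ℤ) (h : Fin m → ℤ)
    (hprim : ∀ i, Finset.univ.gcd (n i) = 1) (c : Fin m → ℝ) :
    interior {x : Fin d → ℝ | ∀ i, pairing (n i) x ≥ c i} =
      {x | ∀ i, pairing (n i) x > c i} := by
  apply subset_antisymm
  · intro x hx i
    have hxT : x ∈ {x : Fin d → ℝ | ∀ i, pairing (n i) x ≥ c i} := interior_subset hx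
    obtain ⟨ε, εpos, hball⟩ := Metric.isOpen_iff.mp isOpen_interior x hx
    obtain ⟨j, hj⟩ := normal_ne_zero (hprim i)
    set cc : ℝ := (n i j : ℝ) with hcc
    have hcc0 : cc ≠ 0 := Int.cast_ne_zero.mpr hj
    set N : ℝ := ‖(Pi.single j cc : Fin d → ℝ)‖ with hN
    set δ : ℝ := ε / (2 * (N + 1)) with hδ
    have hNn : 0 ≤ N := norm_nonneg _
    have hδpos : 0 < δ := by positivity
    set x' : Fin d → ℝ := x - δ • (Pi.single j cc : Fin d → ℝ) with hx'
    have hx'ball : x' ∈ Metric.ball x ε := by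
      rw [Metric.mem_ball, dist_eq_norm, hx']
      have : x - δ • (Pi.single j cc : Fin d → ℝ) - x = -(δ • (Pi.single j cc : Fin d → ℝ)) := by ring_nf
      rw [this, norm_neg, norm_smul, Real.norm_eq_abs, abs_of_pos hδpos, ← hN]
      have h1 : δ * (N + 1) = ε / 2 := by
        rw [hδ]; field_simp
      nlinarith
    have hx'T : pairing (n i) x' ≥ c i := (interior_subset (hball hx'ball)) i
    have hval : pairing (n i) x' = pairing (n i) x - δ * cc ^ 2 := by
      rw [hx', pairing_sub, pairing_smul, pairing_single, ← hcc]
      ring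
    have : 0 < cc ^ 2 := by positivity
    nlinarith [hxT i, hx'T, hval]
  · intro x hx
    have hopen : IsOpen {x : Fin d → ℝ | ∀ i, pairing (n i) x > c i} := by
      rw [Set.setOf_forall]
      exact isOpen_iInter_of_finite fun i =>
        isOpen_lt continuous_const (continuous_pairing (n i))
    have hsub : {x : Fin d → ℝ | ∀ i, pairing (n i) x > c i} ⊆
        {x : Fin d → ℝ | ∀ i, pairing (n i) x ≥ c i} := fun y hy i => le_of_lt (hy i)
    exact interior_maximal hsub hopen hx

lemma interior_dilate (n : Fin m → Fin d → ℤ) (h : Fin m → ℤ)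
    (hprim : ∀ i, Finset.univ.gcd (n i) = 1) {k : ℝ} (hk : 0 < k) :
    interior (k • {x : Fin d → ℝ | ∀ i, pairing (n i) x ≥ -(h i : ℝ)}) =
      {x | ∀ i, pairing (n i) x > -(k * (h i : ℝ))} := by
  rw [smul_halfspaces n h hk, interior_halfspaces n h hprim]

end Helpers2
section Helpers3

variable {d m : ℕ}

lemma no_recession (n : Fin m → Fin d → ℤ) (h : Fin m → ℤ)
    (P : Set (Fin d → ℝ)) (hPeq : P = {x | ∀ i, pairing (n i) x ≥ -(h i : ℝ)})
    (M : ℝ) (hM : ∀ x ∈ P, ‖x‖ ≤ M)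
    (p₁ : Fin d → ℝ) (hp₁ : p₁ ∈ P)
    (v : Fin d → ℝ) (hv : ∀ i, pairing (n i) v ≥ 0) : v = 0 := by
  by_contra hv0
  have hvn : 0 < ‖v‖ := norm_pos_iff.mpr hv0
  set s : ℝ := (M + 1 + ‖p₁‖) / ‖v‖ with hs
  have hM0 : 0 ≤ M := (norm_nonneg p₁).trans (hM p₁ hp₁)
  have hs0 : 0 ≤ s := by positivity
  have hmem : p₁ + s • v ∈ P := by
    rw [hPeq]
    intro i
    rw [pairing_add, pairing_smul]
    have h1 : pairing (n i) p₁ ≥ -(h i : ℝ) := by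
      rw [hPeq] at hp₁; exact hp₁ i
    nlinarith [hv i]
  have hub := hM _ hmem
  have hlb : ‖s • v‖ - ‖p₁‖ ≤ ‖p₁ + s • v‖ := by
    have := norm_add_le (-p₁) (p₁ + s • v)
    rw [neg_add_cancel_left, norm_neg] at this
    linarith
  rw [norm_smul, Real.norm_eq_abs, abs_of_nonneg hs0, hs,
    div_mul_cancel₀ _ hvn.ne'] at hlb
  linarith

lemma heights_nonneg (n : Fin m → Fin d → ℤ) (h : Fin m → ℤ)
    (P : Set (Fin d → ℝ)) (hPeq : P = {x | ∀ i, pairing (n i) x ≥ -(h i : ℝ)})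
    (M : ℝ) (hM : ∀ x ∈ P, ‖x‖ ≤ M)
    (p₁ p₂ : Fin d → ℝ) (hp₁ : p₁ ∈ P) (hp₂ : p₂ ∈ P) (hne : p₁ ≠ p₂)
    (u : Fin d → ℝ) (t : ℝ) (hu : ∀ i, pairing (n i) u ≥ -(t * (h i : ℝ))) :
    0 ≤ t ∧ (t = 0 → u = 0) := by
  constructor
  · by_contra hneg
    push_neg at hneg
    have key : ∀ p : Fin d → ℝ, p ∈ P → u - t • p = 0 := by
      intro p hp
      refine no_recession n h P hPeq M hM p₁ hp₁ _ (fun i => ?_)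
      rw [pairing_sub, pairing_smul]
      have h1 : pairing (n i) p ≥ -(h i : ℝ) := by rw [hPeq] at hp; exact hp i
      nlinarith [hu i]
    have h1 := key p₁ hp₁
    have h2 := key p₂ hp₂
    apply hne
    have : t • p₁ = t • p₂ := by
      rw [sub_eq_zero] at h1 h2
      rw [← h1, ← h2]
    exact smul_right_injective _ (ne_of_lt hneg) this
  · intro ht
    refine no_recession n h P hPeq M hM p₁ hp₁ u (fun i => ?_)
    have := hu i
    rw [ht] at this
    simpa using this

end Helpers3
theorem stmt_2 {d : ℕ} (hd : 1 ≤ d) (P : Set (Fin d → ℝ))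
    (hP : IsLatticePolytope P) (hfull : (interior P).Nonempty)
    {m : ℕ} (n : Fin m → Fin d → ℤ) (h : Fin m → ℤ)
    (hpres : IsFacetPresentation P n h)
    (a : ℕ) (ha : IsCodegree P a)
    (hng : NGIncl n h) :
    P = floorPoly ((a : ℝ) • P) + remPoly n h a := by
  obtain ⟨V, hVlat, hPV⟩ := hP
  obtain ⟨hPeq, hprim, -⟩ := hpres
  obtain ⟨ha1, hain, hamin⟩ := ha
  have haR : (0:ℝ) < (a:ℝ) := by exact_mod_cast Nat.lt_of_lt_of_le Nat.zero_lt_one ha1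
  -- boundedness of P
  have hbdd : Bornology.IsBounded P := by
    rw [hPV]; exact isBounded_convexHull.mpr V.finite_toSet.isBounded
  obtain ⟨M, hM⟩ := isBounded_iff_forall_norm_le.mp hbdd
  -- two distinct points of P
  obtain ⟨x₀, hx₀⟩ := hfull
  obtain ⟨ε, εpos, hball⟩ := Metric.isOpen_iff.mp isOpen_interior x₀ hx₀
  have hx₀P : x₀ ∈ P := interior_subset hx₀
  set i0 : Fin d := ⟨0, hd⟩ with hi0
  set p₂ : Fin d → ℝ := x₀ + (ε/2) • (Pi.single i0 1 : Fin d → ℝ) with hp₂def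
  have hp₂ball : p₂ ∈ Metric.ball x₀ ε := by
    rw [Metric.mem_ball, dist_eq_norm, hp₂def]
    have e1 : x₀ + (ε/2) • (Pi.single i0 1 : Fin d → ℝ) - x₀
        = (ε/2) • (Pi.single i0 1 : Fin d → ℝ) := by
      abel
    rw [e1, norm_smul, Real.norm_eq_abs, abs_of_pos (half_pos εpos)]
    have hle : ‖(Pi.single i0 1 : Fin d → ℝ)‖ ≤ 1 := by
      refine (pi_norm_le_iff_of_nonneg zero_le_one).mpr fun j => ?_
      rw [Pi.single_apply]
      by_cases hji : j = i0 <;> simp [hji]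
    nlinarith
  have hp₂P : p₂ ∈ P := interior_subset (hball hp₂ball)
  have hne : x₀ ≠ p₂ := by
    intro hc
    have h2 : p₂ i0 = x₀ i0 + ε/2 := by simp [hp₂def]
    rw [← hc] at h2
    linarith
  -- heights lemma specialized
  have L2 : ∀ (u : Fin d → ℝ) (t : ℝ), (∀ i, pairing (n i) u ≥ -(t * (h i:ℝ))) →
      0 ≤ t ∧ (t = 0 → u = 0) :=
    fun u t hu => heights_nonneg n h P hPeq M hM x₀ p₂ hx₀P hp₂P hne u t hu
  -- m is positive
  have hm : 0 < m := by
    by_contra hm0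
    push_neg at hm0
    interval_cases m
    have h0 : (Pi.single i0 (1:ℝ) : Fin d → ℝ) = 0 :=
      no_recession n h P hPeq M hM x₀ hx₀P _ (fun i => i.elim0)
    have := congrFun h0 i0
    simp at this
  -- interior descriptions
  have hintK : ∀ k : ℝ, 0 < k →
      interior (k • P) = {x | ∀ i, pairing (n i) x > -(k * (h i:ℝ))} := by
    intro k hk
    rw [hPeq]
    exact interior_dilate n h hprim hk
  have hintA := hintK (a:ℝ) haR
  -- interior lattice point w of aP
  obtain ⟨w, hwint, hwlat⟩ := hain
  have hwS : ∀ i, pairing (n i) w > -((a:ℝ) * (h i:ℝ)) := by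
    rw [hintA] at hwint; exact hwint
  have hwS1 : ∀ i, pairing (n i) w ≥ -((a:ℝ) * (h i:ℝ)) + 1 := by
    intro i
    have := int_strict (pairing_int (n i) hwlat)
      ⟨-((a:ℤ) * h i), by push_cast; ring⟩ (hwS i)
    linarith
  have hwfloor : w ∈ floorPoly ((a:ℝ) • P) := by
    rw [hintA] at hwint
    exact subset_convexHull ℝ _ ⟨by rw [hintA]; exact hwint, hwlat⟩
  -- key: lattice points of P lie in the Minkowski sum
  have hkey : ∀ x, x ∈ P → x ∈ latticePoints d →
      x ∈ floorPoly ((a:ℝ) • P) + remPoly n h a := by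
    intro x hxP hxlat
    have hxineq : ∀ i, pairing (n i) x ≥ -(h i:ℝ) := by rw [hPeq] at hxP; exact hxP
    have hmem1 : ((x, (1:ℝ)) : (Fin d → ℝ) × ℝ) ∈
        (coneOver n h ∩ latticePairs d) \ {(0 : (Fin d → ℝ) × ℝ)} := by
      refine ⟨⟨fun i => by simpa using hxineq i, hxlat, 1, by norm_num⟩, ?_⟩
      simp [Prod.ext_iff]
    obtain ⟨p, hp, q, hq, hpq⟩ := Set.mem_add.mp (hng hmem1)
    obtain ⟨hpint, hplat1, K, hK⟩ := hp
    obtain ⟨hqant, hqlat1, L, hL⟩ := hq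
    have hsum1 : p.1 + q.1 = x := congrArg Prod.fst hpq
    have hsum2 : p.2 + q.2 = 1 := congrArg Prod.snd hpq
    -- p has positive height
    have hp2 := L2 p.1 p.2 (fun i => le_of_lt (hpint i))
    have hK0 : 0 ≤ K := by
      have := hp2.1; rw [hK] at this; exact_mod_cast this
    have hK1 : 1 ≤ K := by
      rcases hK0.lt_or_eq with h1 | h1
      · omega
      · exfalso
        have hp20 : p.2 = 0 := by rw [hK, ← h1]; norm_num
        have hp10 : p.1 = 0 := hp2.2 hp20
        have := hpint ⟨0, hm⟩
        rw [hp10, hp20, pairing_zero] at this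
        simp at this
    -- a ≤ K by codegree minimality
    have haK : (a:ℤ) ≤ K := by
      have hKR : (0:ℝ) < (K:ℝ) := by exact_mod_cast hK1
      have hy : p.1 ∈ interior ((K:ℝ) • P) := by
        rw [hintK (K:ℝ) hKR]
        intro i
        have := hpint i; rw [hK] at this; exact this
      have hcast : ((K.toNat : ℕ) : ℝ) = (K:ℝ) := by
        have := Int.toNat_of_nonneg hK0; exact_mod_cast this
      have h3 : a ≤ K.toNat := hamin K.toNat (by omega) ⟨p.1, by rw [hcast]; exact hy, hplat1⟩
      omega
    have hKL : K + L = 1 := by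
      have : (K:ℝ) + (L:ℝ) = 1 := by rw [← hK, ← hL]; exact hsum2
      exact_mod_cast this
    have hq1 : ∀ i, pairing (n i) q.1 ≥ -((L:ℝ) * (h i:ℝ)) - 1 := fun i => by
      have := hqant i; rw [hL] at this; exact this
    -- q.1 + w lies in the cone at height L + a
    have hLa := L2 (q.1 + w) ((L:ℝ) + (a:ℝ)) (by
      intro i
      rw [pairing_add]
      have h1 := hq1 i
      have h2 := hwS1 i
      nlinarith [h1, h2])
    have hLaZ : 0 ≤ L + (a:ℤ) := by
      have := hLa.1; exact_mod_cast this
    have hcases : K = (a:ℤ) ∨ K = (a:ℤ) + 1 := by omega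
    rcases hcases with hKa | hKa
    · -- K = a : direct decomposition
      have hLval : L = 1 - (a:ℤ) := by omega
      have hyA : p.1 ∈ interior ((a:ℝ) • P) := by
        rw [hintA]
        intro i
        have := hpint i
        rw [hK, hKa] at this
        push_cast at this ⊢
        exact this
      have h1 : p.1 ∈ floorPoly ((a:ℝ) • P) := subset_convexHull ℝ _ ⟨hyA, hplat1⟩
      have h2 : q.1 ∈ remPoly n h a := by
        apply subset_convexHull ℝ _
        refine ⟨hqlat1, fun i => ?_⟩
        have hqi := hq1 i
        have hLR : (L:ℝ) = 1 - (a:ℝ) := by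
          rw [hLval]; push_cast; ring
        rw [hLR] at hqi
        nlinarith [hqi]
      rw [← hsum1]
      exact Set.add_mem_add h1 h2
    · -- K = a + 1 : then q.1 = -w, use x = w + (x - w)
      have hLval : L = -(a:ℤ) := by omega
      have hL0 : (L:ℝ) + (a:ℝ) = 0 := by
        rw [hLval]; push_cast; ring
      have hq10 : q.1 = -w := eq_neg_of_add_eq_zero_left (hLa.2 hL0)
      have h2 : x - w ∈ remPoly n h a := by
        apply subset_convexHull ℝ _
        refine ⟨lattice_sub hxlat hwlat, fun i => ?_⟩
        have hqi := hq1 i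
        rw [hq10, pairing_neg, hLval] at hqi
        push_cast at hqi
        rw [pairing_sub]
        have hxi := hxineq i
        nlinarith [hqi, hxi]
      have hx : x = w + (x - w) := by abel
      rw [hx]
      exact Set.add_mem_add hwfloor h2
  -- conclude
  have hPconv : Convex ℝ P := by rw [hPV]; exact convex_convexHull ℝ _
  apply Set.Subset.antisymm
  · have hconv2 : Convex ℝ (floorPoly ((a:ℝ) • P) + remPoly n h a) :=
      Convex.add (convex_convexHull ℝ _) (convex_convexHull ℝ _)
    have hsub : convexHull ℝ (V : Set (Fin d → ℝ)) ⊆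
        floorPoly ((a:ℝ) • P) + remPoly n h a :=
      convexHull_min
        (fun v hv => hkey v (by rw [hPV]; exact subset_convexHull ℝ _ hv) (hVlat hv))
        hconv2
    intro x hx
    rw [hPV] at hx
    exact hsub hx
  · unfold floorPoly remPoly
    rw [← convexHull_add]
    apply convexHull_min _ hPconv
    rintro t ⟨y, hy, z, hz, rfl⟩
    rw [hPeq]
    intro i
    rw [pairing_add]
    have hyS : pairing (n i) y > -((a:ℝ)*(h i:ℝ)) := by
      have := hy.1; rw [hintA] at this; exact this i
    have hy1 : pairing (n i) y ≥ -((a:ℝ)*(h i:ℝ)) + 1 := by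
      have := int_strict (pairing_int (n i) hy.2)
        ⟨-((a:ℤ) * h i), by push_cast; ring⟩ hyS
      linarith
    have hz1 := hz.2 i
    nlinarith [hy1, hz1]
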